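/- The minimum degree-weighted distance of an irreducible polynomial remainder code C satisfies d_minD(C) > N − K. -/

import Mathlib

open Polynomial

open scoped Classical

/-- The minimum degree-weighted distance of an irreducible polynomial remainder
code satisfies `d_minD(C) > N - K`: for any two distinct codewords (messages
`a ≠ b` of degree `< K`), the degree-weighted distance
`∑_{i : m i ∤ (a - b)} deg m i` exceeds `N - K`. -/
theorem stmt_3 {F : Type*} [Field F] (n k : ℕ) (hk1 : 1 ≤ k) (hkn : k ≤ n)
    (m : Fin n → F[X]) (hm : ∀ i, (m i).Monic) (hirr : ∀ i, Irreducible (m i))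
    (hinj : Function.Injective m)
    (N K : ℕ) (hN : N = ∑ i, (m i).natDegree)
    (hK : K = ∑ i ∈ Finset.univ.filter (fun i : Fin n => (i : ℕ) < k), (m i).natDegree)
    (a b : F[X]) (hab : a ≠ b)
    (hda : a.degree < (K : WithBot ℕ)) (hdb : b.degree < (K : WithBot ℕ)) :
    N - K < ∑ i ∈ Finset.univ.filter (fun i => ¬ m i ∣ (a - b)), (m i).natDegree := by
  set c := a - b with hc
  have hc0 : c ≠ 0 := sub_ne_zero.mpr hab
  have hdc : c.degree < (K : WithBot ℕ) :=
    lt_of_le_of_lt (degree_sub_le a b) (max_lt hda hdb)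
  have hndc : c.natDegree < K := (natDegree_lt_iff_degree_lt hc0).mpr (by exact_mod_cast hdc)
  set S := Finset.univ.filter (fun i : Fin n => m i ∣ c) with hS
  set T := Finset.univ.filter (fun i : Fin n => ¬ m i ∣ c) with hT
  -- pairwise coprime on S
  have hcop : (S : Set (Fin n)).Pairwise (Function.onFun IsCoprime m) := by
    intro i _ j _ hij
    have hne : m i ≠ m j := fun h => hij (hinj h)
    rw [Function.onFun]
    rw [(hirr i).coprime_iff_not_dvd]
    intro hdvd
    exact hne (Polynomial.eq_of_monic_of_associated (hm i) (hm j)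
      ((hirr i).associated_of_dvd (hirr j) hdvd))
  have hprod : (∏ i ∈ S, m i) ∣ c :=
    Finset.prod_dvd_of_coprime hcop (fun i hi => (Finset.mem_filter.mp hi).2)
  have hdegprod : (∏ i ∈ S, m i).natDegree = ∑ i ∈ S, (m i).natDegree :=
    natDegree_prod _ _ (fun i _ => (hirr i).ne_zero)
  have hDle : ∑ i ∈ S, (m i).natDegree ≤ c.natDegree := by
    rw [← hdegprod]; exact natDegree_le_of_dvd hprod hc0
  have hDK : ∑ i ∈ S, (m i).natDegree < K := lt_of_le_of_lt hDle hndc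
  have hsplit : ∑ i ∈ S, (m i).natDegree + ∑ i ∈ T, (m i).natDegree = N := by
    rw [hN, hS, hT]
    exact Finset.sum_filter_add_sum_filter_not _ _ _
  have hKN : K ≤ N := by
    rw [hK, hN]
    exact Finset.sum_le_sum_of_subset (Finset.filter_subset _ _)
  omega
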